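/- For a one-dimensional Ornstein–Uhlenbeck signal dX_t = aX_t dt + σ dW_t with X_0 ~ N(m₀, p₀), the conditional law of X_t given a linear Gaussian observation filtration is Gaussian, and the conditional variance P_t satisfies the scalar Riccati ODE dP_t/dt = 2aP_t - s P_t² + σ² with s = c²/r₂ ≥ 0; if a < 0 and P_0 ≥ 0 then P_t ≥ 0 for all t ≥ 0 and P_t is bounded: P_t ≤ max(P_0, P_∞) where P_∞ is the nonnegative root of 2ap - sp² + σ² = 0 (when s > 0). -/
import Mathlib


/-- Boundedness of the scalar Kalman–Bucy Riccati equation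
`dP/dt = 2aP - sP² + σ²`, `s = c²/r₂ > 0`: if `a < 0` and `P 0 ≥ 0`, then
`0 ≤ P t ≤ max (P 0) P∞` for all `t ≥ 0`, where `P∞` is the nonnegative root
of `2ap - sp² + σ² = 0`. -/
theorem scalar_riccati_bounded (a σ c r₂ : ℝ) (ha : a < 0) (hσ : 0 < σ)
    (hr₂ : 0 < r₂) (hc : c ≠ 0) (P : ℝ → ℝ)
    (hP : ∀ t : ℝ, 0 ≤ t →
      HasDerivAt P (2 * a * P t - (c ^ 2 / r₂) * (P t) ^ 2 + σ ^ 2) t)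
    (hP0 : 0 ≤ P 0) :
    ∀ t : ℝ, 0 ≤ t →
      0 ≤ P t ∧
        P t ≤ max (P 0)
          ((a + Real.sqrt (a ^ 2 + (c ^ 2 / r₂) * σ ^ 2)) / (c ^ 2 / r₂)) := by
  set s := c ^ 2 / r₂ with hs_def
  have hs : 0 < s := div_pos (by positivity) hr₂
  set q := Real.sqrt (a ^ 2 + s * σ ^ 2) with hq_def
  have hqsq : q ^ 2 = a ^ 2 + s * σ ^ 2 := Real.sq_sqrt (by positivity)
  have hq0 : 0 ≤ q := Real.sqrt_nonneg _
  set Pinf := (a + q) / s with hPinf_def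
  have hPinfpos : 0 < Pinf := by
    apply div_pos _ hs
    nlinarith [mul_pos hs (pow_pos hσ 2), hq0, hqsq, sq_nonneg (q + a)]
  set M := max (P 0) Pinf with hM_def
  have hMP0 : P 0 ≤ M := le_max_left _ _
  have hMinf : Pinf ≤ M := le_max_right _ _
  have hcont : ∀ t : ℝ, 0 ≤ t → ContinuousAt P t := fun t ht => (hP t ht).continuousAt
  -- sign of the vector field above `Pinf`
  have hneg : ∀ p : ℝ, Pinf < p → 2 * a * p - s * p ^ 2 + σ ^ 2 < 0 := by
    intro p hp
    have h1 : a + q < s * p := by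
      rw [hPinf_def, div_lt_iff₀ hs] at hp
      linarith [hp]
    have h2 : q < s * p - a := by linarith
    have h3 : q ^ 2 < (s * p - a) ^ 2 := by nlinarith
    rw [hqsq] at h3
    nlinarith [hs]
  -- lower bound: P stays nonnegative
  have hlow : ∀ t : ℝ, 0 ≤ t → 0 ≤ P t := by
    intro t₀ ht₀
    by_contra hng
    push_neg at hng
    have ht₀pos : 0 < t₀ := by
      rcases ht₀.lt_or_eq with h | h
      · exact h
      · exfalso; rw [← h] at hng; linarith
    set S := {t | t ∈ Set.Icc 0 t₀ ∧ 0 ≤ P t} with hS_def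
    have hSne : S.Nonempty := ⟨0, ⟨le_refl 0, ht₀pos.le⟩, hP0⟩
    have hScl : IsClosed S := by
      have hSeq : S = Set.Icc 0 t₀ ∩ P ⁻¹' Set.Ici 0 := by
        ext x; simp [hS_def, Set.mem_Icc]
      rw [hSeq]
      exact ContinuousOn.preimage_isClosed_of_isClosed
        (fun x hx => (hcont x hx.1).continuousWithinAt) isClosed_Icc isClosed_Ici
    have hSbdd : BddAbove S := ⟨t₀, fun x hx => hx.1.2⟩
    set u := sSup S with hu_def
    have huS : u ∈ S := hScl.csSup_mem hSne hSbdd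
    have hu0 : 0 ≤ u := huS.1.1
    have hut₀ : u < t₀ := by
      rcases huS.1.2.lt_or_eq with h | h
      · exact h
      · exact absurd huS.2 (by rw [h]; linarith)
    have hPlt : ∀ t, u < t → t ≤ t₀ → P t < 0 := by
      intro t hut htt₀
      by_contra hge
      push_neg at hge
      have : t ∈ S := ⟨⟨by linarith, htt₀⟩, hge⟩
      exact absurd (le_csSup hSbdd this) (not_le.mpr hut)
    -- P u = 0
    have hPu : P u = 0 := by
      have htend : Filter.Tendsto P (nhdsWithin u (Set.Ioi u)) (nhds (P u)) :=
        (hcont u hu0).continuousWithinAt.tendsto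
      have hev : ∀ᶠ t in nhdsWithin u (Set.Ioi u), P t ≤ 0 := by
        filter_upwards [Ioo_mem_nhdsGT_of_mem (Set.left_mem_Ico.mpr hut₀)] with t ht
        exact (hPlt t ht.1 ht.2.le).le
      have hle : P u ≤ 0 :=
        le_of_tendsto htend hev
      linarith [huS.2]
    have hd : HasDerivAt P (σ ^ 2) u := by
      have := hP u hu0
      rw [hPu] at this
      simpa using this
    have hslope := hasDerivAt_iff_tendsto_slope.mp hd
    have hev : ∀ᶠ t in nhdsWithin u {u}ᶜ, 0 < slope P u t :=
      hslope.eventually (lt_mem_nhds (by positivity))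
    have hev' : ∀ᶠ t in nhdsWithin u (Set.Ioi u), 0 < slope P u t :=
      hev.filter_mono (nhdsWithin_mono u (fun x hx => ne_of_gt hx))
    have hev'' : ∀ᶠ t in nhdsWithin u (Set.Ioi u),
        0 < slope P u t ∧ t ∈ Set.Ioo u t₀ :=
      hev'.and (Ioo_mem_nhdsGT_of_mem (Set.left_mem_Ico.mpr hut₀))
    rcases hev''.exists with ⟨t, hslopet, htmem⟩
    have htu : u < t := htmem.1
    have hPt : P t < 0 := hPlt t htu htmem.2.le
    have hsl : 0 < (P t - P u) / (t - u) := by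
      simpa [slope_def_field] using hslopet
    have hden : 0 < t - u := by linarith
    rcases div_pos_iff.mp hsl with ⟨h1, h2⟩ | ⟨h1, h2⟩
    · linarith [hPu]
    · linarith
  -- upper bound
  have hupp : ∀ t : ℝ, 0 ≤ t → P t ≤ M := by
    intro t₀ ht₀
    refine le_of_forall_pos_lt_add ?_
    intro ε hε
    by_contra hng
    push_neg at hng
    have hP0M : P 0 < M + ε := by linarith
    have ht₀pos : 0 < t₀ := by
      rcases ht₀.lt_or_eq with h | h
      · exact h
      · exfalso; rw [← h] at hng; linarith
    set S := {t | t ∈ Set.Icc 0 t₀ ∧ M + ε ≤ P t} with hS_def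
    have hSne : S.Nonempty := ⟨t₀, ⟨ht₀, le_refl _⟩, hng⟩
    have hScl : IsClosed S := by
      have hSeq : S = Set.Icc 0 t₀ ∩ P ⁻¹' Set.Ici (M + ε) := by
        ext x; simp [hS_def, Set.mem_Icc]
      rw [hSeq]
      exact ContinuousOn.preimage_isClosed_of_isClosed
        (fun x hx => (hcont x hx.1).continuousWithinAt) isClosed_Icc isClosed_Ici
    have hSbdd : BddBelow S := ⟨0, fun x hx => hx.1.1⟩
    set u := sInf S with hu_def
    have huS : u ∈ S := hScl.csInf_mem hSne hSbdd
    have hu0 : 0 ≤ u := huS.1.1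
    have hupos : 0 < u := by
      rcases hu0.lt_or_eq with h | h
      · exact h
      · exact absurd huS.2 (by rw [← h]; linarith)
    have hPlt : ∀ t, 0 ≤ t → t < u → P t < M + ε := by
      intro t ht htu
      by_contra hge
      push_neg at hge
      have : t ∈ S := ⟨⟨ht, by linarith [huS.1.2]⟩, hge⟩
      exact absurd (csInf_le hSbdd this) (not_le.mpr htu)
    have hPu : P u = M + ε := by
      have htend : Filter.Tendsto P (nhdsWithin u (Set.Iio u)) (nhds (P u)) :=
        (hcont u hu0).continuousWithinAt.tendsto
      have hev : ∀ᶠ t in nhdsWithin u (Set.Iio u), P t ≤ M + ε := by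
        filter_upwards [Ioo_mem_nhdsLT_of_mem (Set.right_mem_Ioc.mpr hupos)] with t ht
        exact (hPlt t ht.1.le ht.2).le
      have hle : P u ≤ M + ε := le_of_tendsto htend hev
      linarith [huS.2]
    have hfneg : 2 * a * P u - s * (P u) ^ 2 + σ ^ 2 < 0 := by
      apply hneg
      rw [hPu]
      calc Pinf ≤ M := hMinf
        _ < M + ε := by linarith
    have hd := hP u hu0
    have hslope := hasDerivAt_iff_tendsto_slope.mp hd
    have hev : ∀ᶠ t in nhdsWithin u {u}ᶜ, slope P u t < 0 :=
      hslope.eventually (gt_mem_nhds hfneg)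
    have hev' : ∀ᶠ t in nhdsWithin u (Set.Iio u), slope P u t < 0 :=
      hev.filter_mono (nhdsWithin_mono u (fun x hx => ne_of_lt hx))
    have hev'' : ∀ᶠ t in nhdsWithin u (Set.Iio u),
        slope P u t < 0 ∧ t ∈ Set.Ioo 0 u :=
      hev'.and (Ioo_mem_nhdsLT_of_mem (Set.right_mem_Ioc.mpr hupos))
    rcases hev''.exists with ⟨t, hslopet, htmem⟩
    have htu : t < u := htmem.2
    have hPt : P t < M + ε := hPlt t htmem.1.le htu
    have hsl : (P t - P u) / (t - u) < 0 := by
      simpa [slope_def_field] using hslopet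
    have hden : t - u < 0 := by linarith
    rcases div_neg_iff.mp hsl with ⟨h1, h2⟩ | ⟨h1, h2⟩
    · linarith [hPu]
    · linarith
  intro t ht
  exact ⟨hlow t ht, hupp t ht⟩
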